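/- The ultimate approximator is the most precise approximation: let O : L → 𝒫(L)∖{∅} be a non-deterministic operator on a complete lattice L, and let 𝒪 be any ≼^A_i-monotonic operator with 𝒪(z,z) = (O(z), O(z)) for all z. Then for all x ≤ y in L: 𝒪_l(x,y) ⪯^S O^U_l(x,y) and O^U_l(x,y) ⪯^H 𝒪_u(x,y), where O^U_l(x,y) = ⋃_{x ≤ z ≤ y} O(z). -/
import Mathlib


def smyth {L : Type*} [Lattice L] (X Y : Set L) : Prop :=
  ∀ y ∈ Y, ∃ x ∈ X, x ≤ y

def hoare {L : Type*} [Lattice L] (X Y : Set L) : Prop :=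
  ∀ x ∈ X, ∃ y ∈ Y, x ≤ y

def ultL {L : Type*} [CompleteLattice L] (O : L → Set L) (x y : L) : Set L :=
  ⋃ z ∈ {z : L | x ≤ z ∧ z ≤ y}, O z

theorem ultimate_most_precise {L : Type*} [CompleteLattice L]
    (O : L → Set L) (hO : ∀ z, (O z).Nonempty)
    (𝒪 : L × L → Set L × Set L)
    (hmono : ∀ x₁ y₁ x₂ y₂ : L, x₁ ≤ x₂ → y₂ ≤ y₁ →
      smyth (𝒪 (x₁, y₁)).1 (𝒪 (x₂, y₂)).1 ∧ hoare (𝒪 (x₂, y₂)).2 (𝒪 (x₁, y₁)).2)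
    (hexact : ∀ z : L, 𝒪 (z, z) = (O z, O z)) :
    ∀ x y : L, x ≤ y →
      smyth (𝒪 (x, y)).1 (ultL O x y) ∧ hoare (ultL O x y) (𝒪 (x, y)).2 := by
  intro x y hxy
  constructor
  · intro w hw
    simp only [ultL, Set.mem_iUnion] at hw
    obtain ⟨z, ⟨hxz, hzy⟩, hwz⟩ := hw
    have h := (hmono x y z z hxz hzy).1
    rw [hexact z] at h
    exact h w hwz
  · intro w hw
    simp only [ultL, Set.mem_iUnion] at hw
    obtain ⟨z, ⟨hxz, hzy⟩, hwz⟩ := hw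
    have h := (hmono x y z z hxz hzy).2
    rw [hexact z] at h
    exact h w hwz
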